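/- Let f : ℝ → ℝ ∪ {+∞} be convex and lower semicontinuous with f(0) = 0, f(a) = +∞ for a < 0, and int(dom(f)) ≠ ∅. For δ > 0 define f_δ(a) = (δ/2)a² + ᵟf(a) − ᵟf(0) for a ≥ 0 and f_δ(a) = +∞ for a < 0, where ᵟf is the Moreau–Yosida regularization. Then f_δ is proper, lower semicontinuous, δ-convex (i.e. a ↦ f_δ(a) − (δ/2)a² is convex), satisfies f_δ(0) = 0, has dom(f_δ) = [0, ∞), and is differentiable on [0, ∞) with its distributional second derivative on (0, ∞) satisfying δ ≤ f_δ'' ≤ δ + δ⁻¹. -/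

import Mathlib

open Filter Set Topology MeasureTheory

noncomputable section
open scoped Classical

/-- Convexity for extended-real-valued functions on `ℝ`. -/
def EConvex (f : ℝ → EReal) : Prop :=
  ∀ x y t : ℝ, 0 ≤ t → t ≤ 1 →
    f (t * x + (1 - t) * y) ≤ (t : EReal) * f x + ((1 - t : ℝ) : EReal) * f y

/-- An extended-real-valued function is proper if it is not identically `+∞`
and never takes the value `−∞`. -/
def EProper (f : ℝ → EReal) : Prop := (∃ a, f a ≠ ⊤) ∧ ∀ a, f a ≠ ⊥

/-- Moreau–Yosida regularization with parameter `δ`: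
`ᵟf(a) = inf_{b ≥ 0} ( f(b) + |a−b|² / (2δ) )`. -/
def moreau (δ : ℝ) (f : ℝ → EReal) (a : ℝ) : EReal :=
  ⨅ b : {b : ℝ // 0 ≤ b}, (f b.1 + (((a - b.1) ^ 2 / (2 * δ) : ℝ) : EReal))

/-- The regularized internal energy density
`f_δ(a) = (δ/2)a² + ᵟf(a) − ᵟf(0)` for `a ≥ 0`, `+∞` otherwise. -/
def freg (δ : ℝ) (f : ℝ → EReal) (a : ℝ) : EReal :=
  if 0 ≤ a then ((δ / 2 * a ^ 2 : ℝ) : EReal) + moreau δ f a - moreau δ f 0 else ⊤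


/-- slope inequality for midpoint form convexity -/
lemma slope3 (g : ℝ → ℝ)
    (hg : ∀ x y t : ℝ, 0 ≤ t → t ≤ 1 → g (t*x+(1-t)*y) ≤ t*g x+(1-t)*g y)
    {u v w : ℝ} (huv : u < v) (hvw : v < w) :
    (g v - g u)/(v-u) ≤ (g w - g v)/(w-v) := by
  have huw : u < w := huv.trans hvw
  have ht0 : (0:ℝ) ≤ (w-v)/(w-u) := div_nonneg (by linarith) (by linarith)
  have ht1 : (w-v)/(w-u) ≤ 1 := by
    rw [div_le_one (by linarith)]; linarith
  have hwu0 : w - u ≠ 0 := by linarith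
  have h := hg u w _ ht0 ht1
  have hv : (w-v)/(w-u)*u+(1-(w-v)/(w-u))*w = v := by
    field_simp
    ring
  rw [hv] at h
  rw [div_le_div_iff₀ (by linarith) (by linarith)]
  have hwu : (0:ℝ) < w - u := by linarith
  have h2 : g v * (w-u) ≤ (w-v) * g u + (v-u) * g w := by
    have := mul_le_mul_of_nonneg_right h hwu.le
    calc g v * (w-u) ≤ ((w-v)/(w-u)*g u+(1-(w-v)/(w-u))*g w) * (w-u) := this
      _ = (w-v) * g u + (v-u) * g w := by field_simp; try ring_nf
  nlinarith

lemma exists_subgradient (g : ℝ → ℝ)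
    (hg : ∀ x y t : ℝ, 0 ≤ t → t ≤ 1 → g (t*x+(1-t)*y) ≤ t*g x+(1-t)*g y)
    (a : ℝ) : ∃ c, ∀ x, g a + c*(x-a) ≤ g x := by
  set S : Set ℝ := (fun h => (g (a+h) - g a)/h) '' Ioi 0 with hS
  have hne : S.Nonempty := ⟨(g (a+1) - g a)/1, ⟨1, by norm_num, rfl⟩⟩
  have hlb : ∀ s ∈ S, (g a - g (a-1))/1 ≤ s := by
    rintro s ⟨h, hh, rfl⟩
    have := slope3 g hg (show a-1 < a by linarith) (show a < a+h by linarith [mem_Ioi.1 hh])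
    simpa [show a - (a-1) = 1 by ring, show a + h - a = h by ring] using this
  have hbdd : BddBelow S := ⟨_, hlb⟩
  refine ⟨sInf S, fun x => ?_⟩
  rcases lt_trichotomy x a with hx | rfl | hx
  · have hle : (g a - g x)/(a-x) ≤ sInf S := by
      apply le_csInf hne
      rintro s ⟨h, hh, rfl⟩
      have := slope3 g hg hx (show a < a+h by linarith [mem_Ioi.1 hh])
      simpa [show a + h - a = h by ring] using this
    have hax : (0:ℝ) < a - x := by linarith
    rw [div_le_iff₀ hax] at hle
    nlinarith
  · simp
  · have hmem : (g x - g a)/(x-a) ∈ S := ⟨x - a, by simpa using hx, by simp⟩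
    have hle := csInf_le hbdd hmem
    have hax : (0:ℝ) < x - a := by linarith
    rw [le_div_iff₀ hax] at hle
    nlinarith

lemma deriv_of_semi (δ : ℝ) (hδ : 0 < δ) (g : ℝ → ℝ)
    (hg : ∀ x y t : ℝ, 0 ≤ t → t ≤ 1 → g (t*x+(1-t)*y) ≤ t*g x+(1-t)*g y)
    (hD : ∀ x y t : ℝ, 0 ≤ t → t ≤ 1 →
      (fun z => z^2/(2*δ) - g z) (t*x+(1-t)*y) ≤
        t*(fun z => z^2/(2*δ) - g z) x + (1-t)*(fun z => z^2/(2*δ) - g z) y)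
    (a : ℝ) : ∃ c, HasDerivAt g c a := by
  obtain ⟨c, hc⟩ := exists_subgradient g hg a
  obtain ⟨d, hd⟩ := exists_subgradient (fun z => z^2/(2*δ) - g z) hD a
  have hne : δ ≠ 0 := ne_of_gt hδ
  have hup : ∀ x, g x ≤ g a + (a/δ - d)*(x-a) + (x-a)^2/(2*δ) := by
    intro x
    have hexp : x^2/(2*δ) - a^2/(2*δ) = a/δ*(x-a) + (x-a)^2/(2*δ) := by
      field_simp; ring
    nlinarith [hd x, hexp]
  have hce : c = a/δ - d := by
    set e : ℝ := a/δ - d with he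
    clear_value e
    have hkey : ∀ s : ℝ, (c-e)*s ≤ s^2/(2*δ) := by
      intro s
      have h1 := hc (a+s)
      have h2 := hup (a+s)
      have hs : a + s - a = s := by ring
      rw [hs] at h1 h2
      linarith
    have hth := hkey (δ*(c-e))
    have hsq : (c-e)^2 ≤ 0 := by
      have h2 : (δ*(c-e))^2/(2*δ) = δ*(c-e)^2/2 := by
        field_simp
      rw [h2] at hth
      by_contra h
      push_neg at h
      have hpos : 0 < δ*(c-e)^2 := mul_pos hδ h
      nlinarith
    nlinarith [sq_nonneg (c-e)]
  have hup' : ∀ x, g x ≤ g a + c*(x-a) + (x-a)^2/(2*δ) := by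
    rw [hce]; exact hup
  refine ⟨c, ?_⟩
  rw [hasDerivAt_iff_isLittleO]
  rw [Asymptotics.isLittleO_iff]
  intro ε hε
  filter_upwards [Metric.ball_mem_nhds a (by positivity : (0:ℝ) < 2*δ*ε)] with x hx
  rw [Metric.mem_ball, Real.dist_eq] at hx
  have h1 := hc x
  have h2 := hup' x
  rw [Real.norm_eq_abs, Real.norm_eq_abs]
  rw [abs_le]
  have hm : (x-a)^2 = |x-a|^2 := (sq_abs _).symm
  have hb : (x-a)^2/(2*δ) ≤ ε * |x-a| := by
    rw [hm]
    rw [div_le_iff₀ (by positivity)]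
    nlinarith [abs_nonneg (x-a)]
  have h0 : (0:ℝ) ≤ (x-a)^2/(2*δ) := by positivity
  constructor
  · simp only [smul_eq_mul]
    nlinarith
  · simp only [smul_eq_mul]
    nlinarith

lemma fne_bot (f : ℝ → EReal) (hconv : EConvex f) (hlsc : LowerSemicontinuous f)
    (hf0 : f 0 = 0) (hneg : ∀ a : ℝ, a < 0 → f a = ⊤) : ∀ a : ℝ, f a ≠ ⊥ := by
  intro a hbot
  rcases lt_trichotomy a 0 with ha | ha | ha
  · rw [hneg a ha] at hbot; exact top_ne_bot hbot
  · rw [ha, hf0] at hbot; simp at hbot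
  · have hev : ∀ᶠ x' in 𝓝 (0:ℝ), ((-1:ℝ) : EReal) < f x' := by
      apply hlsc 0
      rw [hf0]
      exact_mod_cast (by norm_num : (-1:ℝ) < 0)
    rw [Metric.eventually_nhds_iff] at hev
    obtain ⟨r, hr, hball⟩ := hev
    set c : ℝ := min a (r/2) with hc
    have hc0 : 0 < c := lt_min ha (by linarith)
    have hca : c ≤ a := min_le_left _ _
    clear_value c
    have hcr : |c - 0| < r := by
      rw [sub_zero, abs_of_pos hc0]
      calc c ≤ r/2 := hc ▸ min_le_right _ _
        _ < r := by linarith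
    have hfb := hball (show dist c 0 < r by rwa [Real.dist_eq])
    set t : ℝ := c / a with ht
    have ht0 : 0 < t := div_pos hc0 ha
    have ht1 : t ≤ 1 := by rw [div_le_one ha]; exact hca
    have hcomb := hconv a 0 t ht0.le ht1
    have hz : t * a + (1 - t) * 0 = c := by
      rw [ht]; field_simp; ring
    rw [hz, hbot, hf0, mul_zero, add_zero] at hcomb
    rw [EReal.coe_mul_bot_of_pos ht0] at hcomb
    exact absurd (le_bot_iff.mp hcomb) (fun h => by rw [h] at hfb; exact absurd hfb (by simp))

lemma flinlb (f : ℝ → EReal) (hconv : EConvex f) (hlsc : LowerSemicontinuous f)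
    (hf0 : f 0 = 0) (hneg : ∀ a : ℝ, a < 0 → f a = ⊤) :
    ∃ K : ℝ, 0 < K ∧ ∀ b : ℝ, 0 ≤ b → ((-K - K*b : ℝ) : EReal) ≤ f b := by
  have hev : ∀ᶠ x' in 𝓝 (0:ℝ), ((-1:ℝ) : EReal) < f x' := by
    apply hlsc 0
    rw [hf0]
    exact_mod_cast (by norm_num : (-1:ℝ) < 0)
  rw [Metric.eventually_nhds_iff] at hev
  obtain ⟨r, hr, hball⟩ := hev
  set ρ : ℝ := r/2 with hρ
  have hρ0 : 0 < ρ := by rw [hρ]; positivity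
  refine ⟨max 1 (1/ρ), lt_of_lt_of_le one_pos (le_max_left _ _), fun b hb => ?_⟩
  set K : ℝ := max 1 (1/ρ) with hK
  have hK1 : 1 ≤ K := le_max_left _ _
  have hKρ : 1/ρ ≤ K := le_max_right _ _
  clear_value K
  clear_value ρ
  rcases le_or_gt b ρ with hbρ | hbρ
  · have hfb := hball (show dist b 0 < r by
      rw [Real.dist_eq, sub_zero, abs_of_nonneg hb]; linarith)
    calc ((-K - K*b : ℝ) : EReal) ≤ ((-1 : ℝ) : EReal) := by
          apply EReal.coe_le_coe_iff.mpr
          nlinarith [mul_nonneg (le_trans zero_le_one hK1) hb]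
      _ ≤ f b := hfb.le
  · rcases eq_or_ne (f b) ⊤ with hfb | hfb
    · rw [hfb]; exact le_top
    have hbne : f b ≠ ⊥ := fne_bot f hconv hlsc hf0 hneg b
    set v : ℝ := (f b).toReal with hv
    clear_value v
    have hfbv : f b = (v : EReal) := by rw [hv]; exact (EReal.coe_toReal hfb hbne).symm
    have hb0 : 0 < b := lt_trans hρ0 hbρ
    set t : ℝ := ρ / b with ht
    clear_value t
    have ht0 : 0 < t := by rw [ht]; exact div_pos hρ0 hb0
    have ht1 : t ≤ 1 := by rw [ht, div_le_one hb0]; linarith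
    have hcomb := hconv b 0 t ht0.le ht1
    have hz : t * b + (1 - t) * 0 = ρ := by rw [ht]; field_simp; ring
    rw [hz, hf0, mul_zero, add_zero, hfbv, ← EReal.coe_mul] at hcomb
    have hfρ := hball (show dist ρ 0 < r by
      rw [Real.dist_eq, sub_zero, abs_of_pos hρ0]; rw [hρ]; linarith)
    have hlt : ((-1:ℝ) : EReal) < ((t*v : ℝ) : EReal) := lt_of_lt_of_le hfρ hcomb
    have hltr : (-1 : ℝ) < t*v := EReal.coe_lt_coe_iff.mp hlt
    rw [hfbv]
    apply EReal.coe_le_coe_iff.mpr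
    -- -K - K*b ≤ v  using  -1 < (ρ/b) v, 1/ρ ≤ K
    have hv1 : -b/ρ < v := by
      rw [ht, div_mul_eq_mul_div, lt_div_iff₀ hb0] at hltr
      rw [div_lt_iff₀ hρ0]
      nlinarith
    rw [neg_div] at hv1
    have hbK : b/ρ ≤ K*b := by
      calc b/ρ = (1/ρ)*b := by ring
        _ ≤ K*b := mul_le_mul_of_nonneg_right hKρ hb
    have : -(K*b) ≤ -(b/ρ) := by linarith
    linarith [hv1, this, hK1]

lemma le_of_eps {a b : ℝ} (h : ∀ ε : ℝ, 0 < ε → a ≤ b + ε) : a ≤ b := by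
  by_contra hc
  push_neg at hc
  have := h ((a-b)/2) (by linarith)
  linarith

lemma moreau_le_sq (f : ℝ → EReal) (hf0 : f 0 = 0) (δ a : ℝ) :
    moreau δ f a ≤ ((a^2/(2*δ) : ℝ) : EReal) := by
  calc moreau δ f a ≤ f 0 + (((a - 0) ^ 2 / (2 * δ) : ℝ) : EReal) :=
        iInf_le _ (⟨0, le_refl 0⟩ : {b : ℝ // 0 ≤ b})
    _ = ((a^2/(2*δ) : ℝ) : EReal) := by rw [hf0, zero_add, sub_zero]

lemma moreau_lb (f : ℝ → EReal) (δ K : ℝ) (hδ : 0 < δ) (hK0 : 0 < K)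
    (hK : ∀ b : ℝ, 0 ≤ b → ((-K - K*b : ℝ) : EReal) ≤ f b) (a : ℝ) :
    ((-K^2*δ - K - a^2/(2*δ) : ℝ) : EReal) ≤ moreau δ f a := by
  rw [moreau]
  apply le_iInf
  rintro ⟨b, hb⟩
  rcases eq_or_ne (f b) ⊤ with h | h
  · rw [h]
    rw [EReal.top_add_of_ne_bot (EReal.coe_ne_bot _)]
    exact le_top
  · have hnb : f b ≠ ⊥ := fun hB => by
      have := hK b hb
      rw [hB] at this
      exact absurd (le_bot_iff.mp this) (EReal.coe_ne_bot _)
    set v : ℝ := (f b).toReal with hv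
    have hfbv : f b = (v : EReal) := by rw [hv]; exact (EReal.coe_toReal h hnb).symm
    have hvK : -K - K*b ≤ v := by
      have := hK b hb
      rw [hfbv] at this
      exact EReal.coe_le_coe_iff.mp this
    rw [hfbv, ← EReal.coe_add]
    apply EReal.coe_le_coe_iff.mpr
    have h2δ : (0:ℝ) < 2*δ := by linarith
    have h3 : (b^2/2)/(2*δ) ≤ ((a-b)^2 + a^2)/(2*δ) :=
      div_le_div_of_nonneg_right (by nlinarith [sq_nonneg (2*a-b)]) h2δ.le
    have h5 : K*b - K^2*δ ≤ (b^2/2)/(2*δ) := by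
      rw [le_div_iff₀ h2δ]
      nlinarith [sq_nonneg (b - 2*K*δ)]
    have hexp : ((a-b)^2 + a^2)/(2*δ) = (a-b)^2/(2*δ) + a^2/(2*δ) := by ring
    linarith

lemma moreau_hub (f : ℝ → EReal) (δ a b m : ℝ) (hb : 0 ≤ b) (hfbt : f b ≠ ⊤)
    (hfbb : f b ≠ ⊥) (hm : moreau δ f a = ((m : ℝ) : EReal)) :
    m ≤ (f b).toReal + (a-b)^2/(2*δ) := by
  have h := iInf_le (fun b : {b : ℝ // 0 ≤ b} =>
    (f b.1 + (((a - b.1) ^ 2 / (2 * δ) : ℝ) : EReal))) (⟨b, hb⟩ : {b : ℝ // 0 ≤ b})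
  rw [← moreau] at h
  rw [hm] at h
  rw [show f b = (((f b).toReal : ℝ) : EReal) from (EReal.coe_toReal hfbt hfbb).symm,
    ← EReal.coe_add] at h
  exact EReal.coe_le_coe_iff.mp h

lemma moreau_heps (f : ℝ → EReal) (hnb : ∀ a : ℝ, f a ≠ ⊥) (δ a ε m : ℝ) (hε : 0 < ε)
    (hm : moreau δ f a = ((m : ℝ) : EReal)) :
    ∃ b : ℝ, 0 ≤ b ∧ f b ≠ ⊤ ∧ (f b).toReal + (a-b)^2/(2*δ) ≤ m + ε := by
  have hlt : moreau δ f a < ((m + ε : ℝ) : EReal) := by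
    rw [hm]
    exact_mod_cast lt_add_of_pos_right m hε
  rw [moreau, iInf_lt_iff] at hlt
  obtain ⟨⟨b, hb⟩, hbl⟩ := hlt
  have hfbt : f b ≠ ⊤ := by
    intro h
    rw [h, EReal.top_add_of_ne_bot (EReal.coe_ne_bot _)] at hbl
    exact absurd hbl (by simp)
  refine ⟨b, hb, hfbt, ?_⟩
  rw [show f b = (((f b).toReal : ℝ) : EReal) from (EReal.coe_toReal hfbt (hnb b)).symm,
    ← EReal.coe_add] at hbl
  exact (EReal.coe_lt_coe_iff.mp hbl).le

lemma M_conv (f : ℝ → EReal) (δ : ℝ) (hδ : 0 < δ) (hconv : EConvex f)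
    (hnb : ∀ a : ℝ, f a ≠ ⊥) (M : ℝ → ℝ)
    (hM : ∀ a : ℝ, moreau δ f a = ((M a : ℝ) : EReal)) :
    ∀ x y t : ℝ, 0 ≤ t → t ≤ 1 →
      M (t*x+(1-t)*y) ≤ t*M x+(1-t)*M y := by
  intro x y t ht0 ht1
  apply le_of_eps
  intro ε hε
  obtain ⟨b₁, hb₁, hfb₁t, h1⟩ := moreau_heps f hnb δ x ε (M x) hε (hM x)
  obtain ⟨b₂, hb₂, hfb₂t, h2⟩ := moreau_heps f hnb δ y ε (M y) hε (hM y)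
  have ht1' : (0:ℝ) ≤ 1 - t := by linarith
  have hb : 0 ≤ t*b₁+(1-t)*b₂ := add_nonneg (mul_nonneg ht0 hb₁) (mul_nonneg ht1' hb₂)
  have hcomb := hconv b₁ b₂ t ht0 ht1
  rw [show f b₁ = (((f b₁).toReal : ℝ) : EReal) from (EReal.coe_toReal hfb₁t (hnb b₁)).symm,
    show f b₂ = (((f b₂).toReal : ℝ) : EReal) from (EReal.coe_toReal hfb₂t (hnb b₂)).symm,
    ← EReal.coe_mul, ← EReal.coe_mul, ← EReal.coe_add] at hcomb
  have hfbt : f (t*b₁+(1-t)*b₂) ≠ ⊤ := fun h => by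
    rw [h] at hcomb
    exact absurd (top_le_iff.mp hcomb) (EReal.coe_ne_top _)
  have hfbR : (f (t*b₁+(1-t)*b₂)).toReal ≤ t*(f b₁).toReal+(1-t)*(f b₂).toReal := by
    have := EReal.toReal_le_toReal hcomb (hnb _) (EReal.coe_ne_top _)
    rwa [EReal.toReal_coe] at this
  have hub := moreau_hub f δ (t*x+(1-t)*y) (t*b₁+(1-t)*b₂) (M (t*x+(1-t)*y)) hb hfbt
    (hnb _) (hM (t*x+(1-t)*y))
  have h2δ : (0:ℝ) < 2*δ := by linarith
  have hsq : ((t*x+(1-t)*y)-(t*b₁+(1-t)*b₂))^2 ≤ t*(x-b₁)^2 + (1-t)*(y-b₂)^2 := by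
    nlinarith [mul_nonneg (mul_nonneg ht0 ht1') (sq_nonneg ((x-b₁)-(y-b₂)))]
  have hdiv : ((t*x+(1-t)*y)-(t*b₁+(1-t)*b₂))^2/(2*δ) ≤
      (t*(x-b₁)^2 + (1-t)*(y-b₂)^2)/(2*δ) :=
    div_le_div_of_nonneg_right hsq h2δ.le
  have e1 : (t*(x-b₁)^2 + (1-t)*(y-b₂)^2)/(2*δ)
      = t*((x-b₁)^2/(2*δ)) + (1-t)*((y-b₂)^2/(2*δ)) := by ring
  have m1 : t*((f b₁).toReal + (x-b₁)^2/(2*δ)) ≤ t*(M x + ε) :=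
    mul_le_mul_of_nonneg_left h1 ht0
  have m2 : (1-t)*((f b₂).toReal + (y-b₂)^2/(2*δ)) ≤ (1-t)*(M y + ε) :=
    mul_le_mul_of_nonneg_left h2 ht1'
  nlinarith [hub, hfbR, hdiv]

lemma M_conc (f : ℝ → EReal) (δ : ℝ) (hδ : 0 < δ)
    (hnb : ∀ a : ℝ, f a ≠ ⊥) (M : ℝ → ℝ)
    (hM : ∀ a : ℝ, moreau δ f a = ((M a : ℝ) : EReal)) :
    ∀ x y t : ℝ, 0 ≤ t → t ≤ 1 →
      t*M x + (1-t)*M y ≤ M (t*x+(1-t)*y)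
        + (t*x^2+(1-t)*y^2 - (t*x+(1-t)*y)^2)/(2*δ) := by
  intro x y t ht0 ht1
  apply le_of_eps
  intro ε hε
  obtain ⟨b, hb, hfbt, hopt⟩ := moreau_heps f hnb δ (t*x+(1-t)*y) ε (M (t*x+(1-t)*y)) hε (hM _)
  have ht1' : (0:ℝ) ≤ 1 - t := by linarith
  have hux := moreau_hub f δ x b (M x) hb hfbt (hnb _) (hM x)
  have huy := moreau_hub f δ y b (M y) hb hfbt (hnb _) (hM y)
  have m1 : t*(M x) ≤ t*((f b).toReal + (x-b)^2/(2*δ)) := mul_le_mul_of_nonneg_left hux ht0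
  have m2 : (1-t)*(M y) ≤ (1-t)*((f b).toReal + (y-b)^2/(2*δ)) :=
    mul_le_mul_of_nonneg_left huy ht1'
  have hid : t*((x-b)^2/(2*δ)) + (1-t)*((y-b)^2/(2*δ)) - ((t*x+(1-t)*y)-b)^2/(2*δ)
      = (t*x^2+(1-t)*y^2 - (t*x+(1-t)*y)^2)/(2*δ) := by ring
  nlinarith [hopt, m1, m2]

/-- Properties of the regularized energy density `f_δ`: it is proper, lower
semicontinuous, `δ`-convex, vanishes at `0`, has domain `[0, ∞)`, is
differentiable on `[0, ∞)`, and its distributional second derivative on `(0, ∞)`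
lies between `δ` and `δ + δ⁻¹` (encoded as `δ`-convexity together with
`(δ + δ⁻¹)`-concavity on `(0, ∞)`). -/
theorem statement2 (f : ℝ → EReal) (hconv : EConvex f)
    (hlsc : LowerSemicontinuous f) (hf0 : f 0 = 0)
    (hneg : ∀ a : ℝ, a < 0 → f a = ⊤)
    (hdom : (interior {a : ℝ | f a ≠ ⊤}).Nonempty)
    (δ : ℝ) (hδ : 0 < δ) :
    EProper (freg δ f) ∧
    LowerSemicontinuous (freg δ f) ∧
    EConvex (fun a => freg δ f a - ((δ / 2 * a ^ 2 : ℝ) : EReal)) ∧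
    freg δ f 0 = 0 ∧
    (∀ a : ℝ, freg δ f a ≠ ⊤ ↔ 0 ≤ a) ∧
    (∀ a ∈ Set.Ici (0 : ℝ),
      DifferentiableWithinAt ℝ (fun x => (freg δ f x).toReal) (Set.Ici 0) a) ∧
    ConvexOn ℝ (Set.Ioi 0) (fun a => (freg δ f a).toReal - δ / 2 * a ^ 2) ∧
    ConcaveOn ℝ (Set.Ioi 0)
      (fun a => (freg δ f a).toReal - (δ + δ⁻¹) / 2 * a ^ 2) := by
  have hnb : ∀ a : ℝ, f a ≠ ⊥ := fne_bot f hconv hlsc hf0 hneg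
  obtain ⟨K, hK0, hKb⟩ := flinlb f hconv hlsc hf0 hneg
  have hnetop : ∀ a : ℝ, moreau δ f a ≠ ⊤ := fun a =>
    ne_top_of_le_ne_top (EReal.coe_ne_top _) (moreau_le_sq f hf0 δ a)
  have hnebot : ∀ a : ℝ, moreau δ f a ≠ ⊥ := fun a =>
    ne_bot_of_le_ne_bot (EReal.coe_ne_bot _) (moreau_lb f δ K hδ hK0 hKb a)
  set M : ℝ → ℝ := fun a => (moreau δ f a).toReal with hMdef
  have hM : ∀ a : ℝ, moreau δ f a = ((M a : ℝ) : EReal) := fun a =>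
    (EReal.coe_toReal (hnetop a) (hnebot a)).symm
  clear_value M
  have hMconv := M_conv f δ hδ hconv hnb M hM
  have hMconc := M_conc f δ hδ hnb M hM
  have hder : ∀ a : ℝ, ∃ c, HasDerivAt M c a := by
    apply deriv_of_semi δ hδ M hMconv
    intro x y t ht0 ht1
    simp only
    have h := hMconc x y t ht0 ht1
    have e : (t*x^2+(1-t)*y^2-(t*x+(1-t)*y)^2)/(2*δ)
        = t*(x^2/(2*δ))+(1-t)*(y^2/(2*δ))-(t*x+(1-t)*y)^2/(2*δ) := by ring
    linarith
  have hMdiffble : Differentiable ℝ M := fun a => ((hder a).choose_spec).differentiableAt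
  have hMcont : Continuous M := hMdiffble.continuous
  have hF : ∀ a : ℝ, 0 ≤ a → freg δ f a = ((δ/2*a^2 + M a - M 0 : ℝ) : EReal) := by
    intro a ha
    unfold freg
    rw [if_pos ha, hM a, hM 0, ← EReal.coe_add, ← EReal.coe_sub]
  have htop : ∀ a : ℝ, a < 0 → freg δ f a = ⊤ := by
    intro a ha
    unfold freg
    rw [if_neg (not_le.mpr ha)]
  have hTR : ∀ a : ℝ, 0 ≤ a → (freg δ f a).toReal = δ/2*a^2 + M a - M 0 := by
    intro a ha
    rw [hF a ha]
    exact EReal.toReal_coe _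
  refine ⟨⟨⟨0, ?_⟩, ?_⟩, ?_, ?_, ?_, ?_, ?_, ?_, ?_⟩
  · rw [hF 0 le_rfl]; exact EReal.coe_ne_top _
  · intro a
    rcases le_or_gt 0 a with h | h
    · rw [hF a h]; exact EReal.coe_ne_bot _
    · rw [htop a h]; simp
  · -- lower semicontinuity
    intro x y hy
    rcases lt_or_ge x 0 with hx | hx
    · rw [htop x hx] at hy
      filter_upwards [Iio_mem_nhds hx] with z hz
      rw [htop z hz]
      exact hy
    · rw [hF x hx] at hy
      obtain ⟨r, hyr, hrF⟩ := EReal.exists_between_coe_real hy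
      have hFc : Continuous (fun z : ℝ => δ/2*z^2 + M z - M 0) := by
        apply Continuous.sub
        · exact (continuous_const.mul (continuous_pow 2)).add hMcont
        · exact continuous_const
      have hopen : IsOpen {z : ℝ | r < δ/2*z^2 + M z - M 0} :=
        isOpen_lt continuous_const hFc
      have hmem : x ∈ {z : ℝ | r < δ/2*z^2 + M z - M 0} := EReal.coe_lt_coe_iff.mp hrF
      filter_upwards [hopen.mem_nhds hmem] with z hz
      rcases le_or_gt 0 z with h0 | h0
      · rw [hF z h0]
        exact lt_trans hyr (EReal.coe_lt_coe_iff.mpr hz)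
      · rw [htop z h0]
        exact lt_of_lt_of_le hyr le_top
  · -- EConvex of shifted function
    have hsh : ∀ a : ℝ, 0 ≤ a →
        freg δ f a - ((δ/2*a^2 : ℝ) : EReal) = ((M a - M 0 : ℝ) : EReal) := by
      intro a ha
      rw [hF a ha, ← EReal.coe_sub]
      norm_cast
      ring
    have hshn : ∀ a : ℝ, a < 0 → freg δ f a - ((δ/2*a^2 : ℝ) : EReal) = ⊤ := by
      intro a ha
      rw [htop a ha]
      exact EReal.top_sub_coe _
    have hshnb : ∀ a : ℝ, freg δ f a - ((δ/2*a^2 : ℝ) : EReal) ≠ ⊥ := by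
      intro a
      rcases le_or_gt 0 a with h | h
      · rw [hsh a h]; exact EReal.coe_ne_bot _
      · rw [hshn a h]; simp
    intro x y t ht0 ht1
    simp only
    rcases eq_or_lt_of_le ht0 with h0 | hpos
    · rw [← h0]
      norm_num
    rcases eq_or_lt_of_le ht1 with h1 | hlt1
    · rw [h1]
      norm_num
    rcases lt_or_ge x 0 with hx | hx
    · rw [hshn x hx, EReal.coe_mul_top_of_pos hpos,
        EReal.top_add_of_ne_bot]
      · exact le_top
      · rcases le_or_gt 0 y with hy | hy
        · rw [hsh y hy, ← EReal.coe_mul]; exact EReal.coe_ne_bot _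
        · rw [hshn y hy, EReal.coe_mul_top_of_pos (by linarith)]; simp
    rcases lt_or_ge y 0 with hy | hy
    · rw [hshn y hy, EReal.coe_mul_top_of_pos (by linarith : (0:ℝ) < 1 - t),
        EReal.add_top_of_ne_bot]
      · exact le_top
      · rw [hsh x hx, ← EReal.coe_mul]; exact EReal.coe_ne_bot _
    · have hz0 : 0 ≤ t*x+(1-t)*y := add_nonneg (mul_nonneg ht0 hx)
        (mul_nonneg (by linarith) hy)
      rw [hsh _ hz0, hsh x hx, hsh y hy, ← EReal.coe_mul, ← EReal.coe_mul,
        ← EReal.coe_add]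
      apply EReal.coe_le_coe_iff.mpr
      have h := hMconv x y t ht0 ht1
      nlinarith [h]
  · -- freg 0 = 0
    rw [hF 0 le_rfl]
    have : (δ/2*(0:ℝ)^2 + M 0 - M 0 : ℝ) = 0 := by ring
    rw [this]
    exact EReal.coe_zero
  · -- domain
    intro a
    constructor
    · intro h
      by_contra h0
      push_neg at h0
      exact h (htop a h0)
    · intro h
      rw [hF a h]
      exact EReal.coe_ne_top _
  · -- differentiability
    intro a ha
    have hFd : Differentiable ℝ (fun z : ℝ => δ/2*z^2 + M z - M 0) := by
      apply Differentiable.sub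
      · exact ((differentiable_pow 2).const_mul (δ/2)).add hMdiffble
      · exact differentiable_const _
    exact ((hFd a).differentiableWithinAt).congr (fun z hz => hTR z hz) (hTR a ha)
  · -- convexity on Ioi 0
    unfold ConvexOn
    refine ⟨(convex_Ioi (0:ℝ) : Convex ℝ (Set.Ioi (0:ℝ))), ?_⟩
    intro x hx y hy a b ha hb hab
    simp only [smul_eq_mul]
    have hb' : b = 1 - a := by linarith
    subst hb'
    have hx0 : (0:ℝ) < x := hx
    have hy0 : (0:ℝ) < y := hy
    have hz0 : (0:ℝ) < a*x+(1-a)*y := by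
      rcases eq_or_lt_of_le ha with h | h
      · rw [← h]; norm_num; exact hy0
      · nlinarith [mul_nonneg (by linarith : (0:ℝ) ≤ 1-a) hy0.le]
    rw [hTR _ hz0.le, hTR _ hx0.le, hTR _ hy0.le]
    have h := hMconv x y a ha (by linarith)
    nlinarith [h]
  · -- concavity on Ioi 0
    unfold ConcaveOn
    refine ⟨(convex_Ioi (0:ℝ) : Convex ℝ (Set.Ioi (0:ℝ))), ?_⟩
    intro x hx y hy a b ha hb hab
    simp only [smul_eq_mul]
    have hb' : b = 1 - a := by linarith
    subst hb'
    have hx0 : (0:ℝ) < x := hx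
    have hy0 : (0:ℝ) < y := hy
    have hz0 : (0:ℝ) < a*x+(1-a)*y := by
      rcases eq_or_lt_of_le ha with h | h
      · rw [← h]; norm_num; exact hy0
      · nlinarith [mul_nonneg (by linarith : (0:ℝ) ≤ 1-a) hy0.le]
    rw [hTR _ hz0.le, hTR _ hx0.le, hTR _ hy0.le]
    have h := hMconc x y a ha (by linarith)
    have e : (a*x^2+(1-a)*y^2-(a*x+(1-a)*y)^2)/(2*δ)
        = a*(x^2/(2*δ))+(1-a)*(y^2/(2*δ))-(a*x+(1-a)*y)^2/(2*δ) := by ring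
    have haux : ∀ w : ℝ, (δ+δ⁻¹)/2*w^2 = δ/2*w^2 + w^2/(2*δ) := by
      intro w
      field_simp
    rw [haux, haux, haux]
    nlinarith [h, e]
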